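/- For all z, w ∈ ℂ⁴ and ℏ > 0, (1/2π) ∫₀^{2π} exp((1/ℏ) z · T(e^{iψ})w) dψ = Σ_{k≥0} (1/((k!)² ℏ^{2k})) (z₁ conj(w₁) + z₂ conj(w₂))^k (z₃ conj(w₃) + z₄ conj(w₄))^k, where T(e^{iψ}) = diag(e^{-iψ}, e^{-iψ}, e^{iψ}, e^{iψ}) and z · v = Σⱼ zⱼ conj(vⱼ). -/

import Mathlib

open Complex ComplexConjugate

lemma int_exp_int_mul (m : ℤ) :
    (∫ ψ in (0:ℝ)..(2*Real.pi), Complex.exp (m * Complex.I * ψ))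
      = if m = 0 then (2*Real.pi : ℂ) else 0 := by
  rcases eq_or_ne m 0 with h | h
  · simp [h]
  · rw [if_neg h]
    have hc : (m : ℂ) * Complex.I ≠ 0 := by
      simp [Complex.I_ne_zero, Int.cast_injective.ne_iff, h]
    rw [integral_exp_mul_complex hc]
    have h1 : Complex.exp ((m:ℂ) * Complex.I * (2*Real.pi:ℝ)) = 1 := by
      have := Complex.exp_int_mul_two_pi_mul_I m
      rw [← this]
      push_cast
      ring_nf
    rw [show ((2*Real.pi:ℝ):ℂ) = (2*(Real.pi:ℂ)) by push_cast; ring] at h1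
    simp [h1]

lemma term_int (a b : ℂ) (n : ℕ) :
    (∫ ψ in (0:ℝ)..(2*Real.pi),
        (a * Complex.exp (Complex.I*ψ) + b * Complex.exp (-Complex.I*ψ))^n / n.factorial)
      = if n % 2 = 0 then (2*Real.pi:ℂ) * (a^(n/2) * b^(n/2) / ((n/2).factorial : ℂ)^2) else 0 := by
  have hexp : ∀ (j : ℕ) (hj : j ∈ Finset.range (n+1)) (ψ : ℝ),
      (a * Complex.exp (Complex.I*ψ))^j * (b * Complex.exp (-Complex.I*ψ))^(n-j) * (n.choose j : ℂ)
      = a^j * b^(n-j) * (n.choose j : ℂ) * Complex.exp (((2*j - n : ℤ) : ℂ) * Complex.I * ψ) := by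
    intro j hj ψ
    rw [mul_pow, mul_pow, ← Complex.exp_nat_mul, ← Complex.exp_nat_mul]
    have hjn : j ≤ n := Nat.lt_succ_iff.1 (Finset.mem_range.1 hj)
    have hee : Complex.exp ((j:ℂ) * (Complex.I*ψ)) * Complex.exp (((n-j:ℕ):ℂ) * (-Complex.I*ψ))
        = Complex.exp (((2*j - n : ℤ) : ℂ) * Complex.I * ψ) := by
      rw [← Complex.exp_add]
      congr 1
      push_cast [Nat.cast_sub hjn]
      ring
    rw [← hee]
    ring
  have hF : ∀ ψ : ℝ,
      (a * Complex.exp (Complex.I*ψ) + b * Complex.exp (-Complex.I*ψ))^n / n.factorial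
      = ∑ j ∈ Finset.range (n+1),
          (a^j * b^(n-j) * (n.choose j : ℂ) / n.factorial) * Complex.exp (((2*j - n : ℤ) : ℂ) * Complex.I * ψ) := by
    intro ψ
    rw [add_pow, Finset.sum_div]
    refine Finset.sum_congr rfl fun j hj => ?_
    rw [hexp j hj ψ]; ring
  simp_rw [hF]
  rw [intervalIntegral.integral_finset_sum]
  · have : ∀ j ∈ Finset.range (n+1),
        (∫ ψ in (0:ℝ)..(2*Real.pi),
          (a^j * b^(n-j) * (n.choose j : ℂ) / n.factorial) * Complex.exp (((2*j - n : ℤ) : ℂ) * Complex.I * ψ))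
        = (a^j * b^(n-j) * (n.choose j : ℂ) / n.factorial) * (if (2*(j:ℤ) - n) = 0 then (2*Real.pi:ℂ) else 0) := by
      intro j hj
      rw [intervalIntegral.integral_const_mul, int_exp_int_mul]
    rw [Finset.sum_congr rfl this]
    rcases Nat.even_or_odd n with ⟨k, hk⟩ | hodd
    · have hn2 : n % 2 = 0 := by omega
      have hnd : n / 2 = k := by omega
      rw [if_pos hn2, hnd]
      rw [Finset.sum_eq_single k]
      · rw [if_pos (by omega), hk]
        have h2k : k + k - k = k := by omega
        rw [h2k, show k + k = 2 * k by ring]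
        have hfac : ((2*k).factorial : ℂ) = ((2*k).choose k : ℂ) * (k.factorial:ℂ) * (k.factorial:ℂ) := by
          rw_mod_cast [← Nat.choose_mul_factorial_mul_factorial (by omega : k ≤ 2*k)]
          congr 2
          omega
        have hkne : (k.factorial : ℂ) ≠ 0 := by exact_mod_cast k.factorial_ne_zero
        have hcne : ((2*k).choose k : ℂ) ≠ 0 := by
          exact_mod_cast (Nat.choose_pos (by omega : k ≤ 2*k)).ne'
        field_simp [hfac]
        rw [hfac]
        ring
      · intro j hj hjk
        rw [if_neg (by omega), mul_zero]
      · intro h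
        exact absurd (Finset.mem_range.2 (by omega)) h
    · obtain ⟨k, hk⟩ := hodd
      rw [if_neg (by omega)]
      refine Finset.sum_eq_zero fun j hj => ?_
      rw [if_neg (by omega), mul_zero]
  · intro j hj
    apply Continuous.intervalIntegrable
    fun_prop

lemma circle_int (a b : ℂ) :
    (∫ ψ in (0:ℝ)..(2*Real.pi),
        Complex.exp (a * Complex.exp (Complex.I*ψ) + b * Complex.exp (-Complex.I*ψ)))
      = ∑' k : ℕ, (2*Real.pi:ℂ) * (a^k * b^k / ((k.factorial : ℂ))^2) := by
  set M : ℝ := ‖a‖ + ‖b‖ with hM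
  have hs : HasSum
      (fun n : ℕ => ∫ ψ in (0:ℝ)..(2*Real.pi),
        (a * Complex.exp (Complex.I*ψ) + b * Complex.exp (-Complex.I*ψ))^n / n.factorial)
      (∫ ψ in (0:ℝ)..(2*Real.pi),
        Complex.exp (a * Complex.exp (Complex.I*ψ) + b * Complex.exp (-Complex.I*ψ))) := by
    apply intervalIntegral.hasSum_integral_of_dominated_convergence
      (bound := fun n (_ : ℝ) => M^n / n.factorial)
    · intro n
      apply Continuous.aestronglyMeasurable
      fun_prop
    · intro n
      filter_upwards with ψ _
      have h1 : ‖a * Complex.exp (Complex.I*ψ) + b * Complex.exp (-Complex.I*ψ)‖ ≤ M := by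
        refine le_trans (norm_add_le _ _) ?_
        rw [hM]
        gcongr <;> rw [norm_mul] <;>
          simp [Complex.norm_exp]
      calc ‖(a * Complex.exp (Complex.I*ψ) + b * Complex.exp (-Complex.I*ψ))^n / n.factorial‖
          = ‖a * Complex.exp (Complex.I*ψ) + b * Complex.exp (-Complex.I*ψ)‖^n / n.factorial := by
            rw [norm_div, norm_pow]
            congr 1
            simp [Complex.norm_natCast]
        _ ≤ M^n / n.factorial := by gcongr
    · filter_upwards with ψ _
      exact Real.summable_pow_div_factorial M
    · exact intervalIntegrable_const
    · filter_upwards with ψ _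
      rw [Complex.exp_eq_exp_ℂ]
      exact NormedSpace.expSeries_div_hasSum_exp _
  have hterm : ∀ n : ℕ,
      (∫ ψ in (0:ℝ)..(2*Real.pi),
        (a * Complex.exp (Complex.I*ψ) + b * Complex.exp (-Complex.I*ψ))^n / n.factorial)
      = if n % 2 = 0 then (2*Real.pi:ℂ) * (a^(n/2) * b^(n/2) / ((n/2).factorial : ℂ)^2) else 0 :=
    term_int a b
  rw [funext hterm] at hs
  have hinj : Function.Injective (fun k : ℕ => 2 * k) := fun x y h => by dsimp only at h; omega
  have h0 : ∀ n ∉ Set.range (fun k : ℕ => 2 * k),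
      (if n % 2 = 0 then (2*Real.pi:ℂ) * (a^(n/2) * b^(n/2) / ((n/2).factorial : ℂ)^2) else 0) = 0 := by
    intro n hn
    rw [if_neg]
    intro h
    exact hn ⟨n/2, show 2*(n/2) = n by omega⟩
  have hs2 := (hinj.hasSum_iff h0).2 hs
  rw [← hs2.tsum_eq]
  apply tsum_congr
  intro k
  simp only [Function.comp_apply]
  rw [if_pos (by omega), Nat.mul_div_cancel_left k (by norm_num)]

/-- The circle average of `exp((1/ℏ) z · T(e^{iψ})w)` over `S¹` equals the series `Q₄(z,w)`. -/
theorem Q4_circle_average (ℏ : ℝ) (hℏ : 0 < ℏ) (z₁ z₂ z₃ z₄ w₁ w₂ w₃ w₄ : ℂ) :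
    (1 / (2 * (Real.pi : ℂ))) * ∫ ψ in (0 : ℝ)..(2 * Real.pi),
        Complex.exp ((1 / (ℏ : ℂ)) *
          (z₁ * conj (Complex.exp (-Complex.I * ψ) * w₁)
            + z₂ * conj (Complex.exp (-Complex.I * ψ) * w₂)
            + z₃ * conj (Complex.exp (Complex.I * ψ) * w₃)
            + z₄ * conj (Complex.exp (Complex.I * ψ) * w₄)))
      = ∑' k : ℕ, (1 / (((k.factorial : ℂ)) ^ 2 * (ℏ : ℂ) ^ (2 * k)))
          * (z₁ * conj w₁ + z₂ * conj w₂) ^ k * (z₃ * conj w₃ + z₄ * conj w₄) ^ k := by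
  set A : ℂ := z₁ * conj w₁ + z₂ * conj w₂ with hA
  set B : ℂ := z₃ * conj w₃ + z₄ * conj w₄ with hB
  have hℏ0 : (ℏ : ℂ) ≠ 0 := by exact_mod_cast hℏ.ne'
  have hπ0 : (Real.pi : ℂ) ≠ 0 := by exact_mod_cast Real.pi_ne_zero
  have hcong : ∀ ψ : ℝ,
      Complex.exp ((1 / (ℏ : ℂ)) *
          (z₁ * conj (Complex.exp (-Complex.I * ψ) * w₁)
            + z₂ * conj (Complex.exp (-Complex.I * ψ) * w₂)
            + z₃ * conj (Complex.exp (Complex.I * ψ) * w₃)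
            + z₄ * conj (Complex.exp (Complex.I * ψ) * w₄)))
      = Complex.exp ((A / ℏ) * Complex.exp (Complex.I*ψ) + (B / ℏ) * Complex.exp (-Complex.I*ψ)) := by
    intro ψ
    congr 1
    have h1 : (starRingEnd ℂ) (Complex.exp (-Complex.I*ψ)) = Complex.exp (Complex.I*ψ) := by
      rw [← Complex.exp_conj]; congr 1; simp
    have h2 : (starRingEnd ℂ) (Complex.exp (Complex.I*ψ)) = Complex.exp (-Complex.I*ψ) := by
      rw [← Complex.exp_conj]; congr 1; simp
    simp only [map_mul, h1, h2, hA, hB]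
    ring
  rw [intervalIntegral.integral_congr (fun ψ _ => hcong ψ), circle_int (A/ℏ) (B/ℏ),
    ← tsum_mul_left]
  apply tsum_congr
  intro k
  have hk0 : ((k.factorial : ℂ)) ≠ 0 := by exact_mod_cast k.factorial_ne_zero
  rw [div_pow, div_pow, show (ℏ:ℂ)^(2*k) = (ℏ:ℂ)^k * (ℏ:ℂ)^k by rw [two_mul, pow_add]]
  have hℏk : ((ℏ:ℂ))^k ≠ 0 := pow_ne_zero _ hℏ0
  field_simp
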